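/- Suppose (x, z, s, τ, κ) satisfies τ > 0, κ ≥ 0, s ∈ K, z ∈ K*, the homogeneous equations Px + Aᵀz + qτ = 0, Ax + s − bτ = 0, κ + qᵀx + bᵀz + (1/τ)xᵀPx = 0, and the complementarity condition ⟨s, z⟩ + τκ = 0. Then κ = 0 and ⟨s, z⟩ = 0, the rescaled point (x̄, s̄, z̄) := (x/τ, s/τ, z/τ) satisfies Ax̄ + s̄ = b, s̄ ∈ K, Px̄ + Aᵀz̄ = −q, z̄ ∈ K*, and ⟨s̄, z̄⟩ = 0; moreover (x̄, s̄) is optimal for the primal problem: for every (x′, s′) with Ax′ + s′ = b and s′ ∈ K one has ½x′ᵀPx′ + qᵀx′ ≥ ½x̄ᵀPx̄ + qᵀx̄. -/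

import Mathlib

open Matrix

/-- a complementary solution of the homogeneous embedding with `τ > 0`
yields a primal-dual optimal solution after rescaling. -/
theorem stmt4 {n m : ℕ} (P : Matrix (Fin n) (Fin n) ℝ) (A : Matrix (Fin m) (Fin n) ℝ)
    (q : Fin n → ℝ) (b : Fin m → ℝ) (K : Set (Fin m → ℝ))
    (hP : P.PosSemidef) (hKclosed : IsClosed K) (hKconv : Convex ℝ K)
    (hKcone : ∀ c : ℝ, 0 < c → ∀ v ∈ K, c • v ∈ K)
    (x : Fin n → ℝ) (z s : Fin m → ℝ) (τ κ : ℝ)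
    (hτ : 0 < τ) (hκ : 0 ≤ κ) (hs : s ∈ K)
    (hz : z ∈ {z' : Fin m → ℝ | ∀ s' ∈ K, 0 ≤ z' ⬝ᵥ s'})
    (heq1 : P.mulVec x + Aᵀ.mulVec z + τ • q = 0)
    (heq2 : A.mulVec x + s - τ • b = 0)
    (heq3 : κ + q ⬝ᵥ x + b ⬝ᵥ z + (1/τ) * (x ⬝ᵥ P.mulVec x) = 0)
    (hcomp : s ⬝ᵥ z + τ * κ = 0) :
    κ = 0 ∧ s ⬝ᵥ z = 0
    ∧ A.mulVec (τ⁻¹ • x) + τ⁻¹ • s = b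
    ∧ τ⁻¹ • s ∈ K
    ∧ P.mulVec (τ⁻¹ • x) + Aᵀ.mulVec (τ⁻¹ • z) = -q
    ∧ τ⁻¹ • z ∈ {z' : Fin m → ℝ | ∀ s' ∈ K, 0 ≤ z' ⬝ᵥ s'}
    ∧ (τ⁻¹ • s) ⬝ᵥ (τ⁻¹ • z) = 0
    ∧ ∀ x' : Fin n → ℝ, ∀ s' ∈ K, A.mulVec x' + s' = b →
        (1/2) * (x' ⬝ᵥ P.mulVec x') + q ⬝ᵥ x'
          ≥ (1/2) * ((τ⁻¹ • x) ⬝ᵥ P.mulVec (τ⁻¹ • x)) + q ⬝ᵥ (τ⁻¹ • x) := by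
  have hPsym : Pᵀ = P := by simpa using hP.1.eq
  have hPnn : ∀ v, 0 ≤ v ⬝ᵥ P.mulVec v := fun v => by simpa using hP.dotProduct_mulVec_nonneg v
  have hsz : 0 ≤ s ⬝ᵥ z := by rw [dotProduct_comm]; exact hz s hs
  have hτκ : 0 ≤ τ * κ := mul_nonneg hτ.le hκ
  have hκ0 : κ = 0 := by
    have : τ * κ = 0 := by linarith
    rcases mul_eq_zero.mp this with h | h
    · exact absurd h hτ.ne'
    · exact h
  have hsz0 : s ⬝ᵥ z = 0 := by linarith [hcomp, hκ0]
  have hτne : τ ≠ 0 := hτ.ne'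
  have h2 : A.mulVec x + s = τ • b := sub_eq_zero.mp heq2
  have h1 : P.mulVec x + Aᵀ.mulVec z = -(τ • q) := eq_neg_of_add_eq_zero_left heq1
  have hfeas : A.mulVec (τ⁻¹ • x) + τ⁻¹ • s = b := by
    rw [Matrix.mulVec_smul, ← smul_add, h2, smul_smul, inv_mul_cancel₀ hτne, one_smul]
  have hdual : P.mulVec (τ⁻¹ • x) + Aᵀ.mulVec (τ⁻¹ • z) = -q := by
    rw [Matrix.mulVec_smul, Matrix.mulVec_smul, ← smul_add, h1, smul_neg, smul_smul,
      inv_mul_cancel₀ hτne, one_smul]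
  have hzbar : (τ⁻¹ • z) ∈ {z' : Fin m → ℝ | ∀ s' ∈ K, 0 ≤ z' ⬝ᵥ s'} := by
    intro s' hs'
    rw [smul_dotProduct]
    exact smul_nonneg (inv_nonneg.mpr hτ.le) (hz s' hs')
  refine ⟨hκ0, hsz0, hfeas, hKcone τ⁻¹ (inv_pos.mpr hτ) s hs, hdual, hzbar, ?_, ?_⟩
  · rw [smul_dotProduct, dotProduct_smul, hsz0]; simp
  · intro x' s' hs' hfeas'
    -- key scalar identities
    have hsymm : ∀ u v : Fin n → ℝ, u ⬝ᵥ P.mulVec v = v ⬝ᵥ P.mulVec u := by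
      intro u v
      rw [Matrix.dotProduct_mulVec, ← Matrix.vecMul_transpose, hPsym, dotProduct_comm]
    -- expression for q ⬝ᵥ w via the dual equation
    have hq : ∀ w : Fin n → ℝ, q ⬝ᵥ w
        = -((τ⁻¹ • x) ⬝ᵥ P.mulVec w + (τ⁻¹ • z) ⬝ᵥ A.mulVec w) := by
      intro w
      have : q ⬝ᵥ w = -(P.mulVec (τ⁻¹ • x) + Aᵀ.mulVec (τ⁻¹ • z)) ⬝ᵥ w := by
        rw [hdual, neg_neg]
      rw [this, neg_dotProduct, add_dotProduct]
      congr 2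
      · rw [dotProduct_comm]; exact hsymm w _
      · rw [Matrix.mulVec_transpose, ← Matrix.dotProduct_mulVec]
    have hAx' : A.mulVec x' = b - s' := eq_sub_of_add_eq hfeas'
    have hAxb : A.mulVec (τ⁻¹ • x) = b - τ⁻¹ • s := eq_sub_of_add_eq hfeas
    have hzs : (τ⁻¹ • z) ⬝ᵥ (τ⁻¹ • s) = 0 := by
      rw [smul_dotProduct, dotProduct_smul, dotProduct_comm, hsz0]; simp
    have e1 : q ⬝ᵥ x' = -((τ⁻¹ • x) ⬝ᵥ P.mulVec x'
        + ((τ⁻¹ • z) ⬝ᵥ b - (τ⁻¹ • z) ⬝ᵥ s')) := by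
      rw [hq x', hAx', dotProduct_sub]
    have e2 : (τ⁻¹ • z) ⬝ᵥ b = -(q ⬝ᵥ (τ⁻¹ • x)) - (τ⁻¹ • x) ⬝ᵥ P.mulVec (τ⁻¹ • x) := by
      have := hq (τ⁻¹ • x)
      rw [hAxb, dotProduct_sub, hzs] at this
      linarith
    have e3 : 0 ≤ (τ⁻¹ • z) ⬝ᵥ s' := hzbar s' hs'
    have e4 : 0 ≤ (x' - τ⁻¹ • x) ⬝ᵥ P.mulVec (x' - τ⁻¹ • x) := hPnn _
    have hexp : (x' - τ⁻¹ • x) ⬝ᵥ P.mulVec (x' - τ⁻¹ • x)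
        = x' ⬝ᵥ P.mulVec x' - 2 * ((τ⁻¹ • x) ⬝ᵥ P.mulVec x')
          + (τ⁻¹ • x) ⬝ᵥ P.mulVec (τ⁻¹ • x) := by
      rw [Matrix.mulVec_sub, dotProduct_sub, sub_dotProduct, sub_dotProduct,
        hsymm x' (τ⁻¹ • x)]
      ring
    rw [ge_iff_le]
    linarith
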